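/- arXiv:1805.02661 — 2 statements merged into one kernel-verified Lean document; each statement's English description precedes it below -/
import Mathlib

section
/- Let λ ∈ ℂ with λ ≠ 0. For d1, d2 ∈ ℕ define c d1 d2 = (1/((2d1+1)!·(2d2+1)!)) · iteratedDeriv (2d2+1) (fun u2 : ℂ => iteratedDeriv (2d1+1) (fun u1 : ℂ => u1^2 * u2^2 * (-u1 - u2)^((2*(d1:ℤ)+2*(d2:ℤ)-2)) ) λ) λ, the iterated residue at (u1,u2)=(λ,λ) of u1^2u2^2(-u1-u2)^{2(d1+d2-1)}/((u1-λ)^{2(d1+1)}(u2-λ)^{2(d2+1)}). Then for all z1, z2 ∈ ℂ with |z1| < 1/100 and |z2| < 1/100, HasSum (fun p : ℕ × ℕ => z1^p.1 * z2^p.2 * c p.1 p.2) ((3 - 6*(z1+z2) + 3*z1^2 + 10*z1*z2 + 3*z2^2) / (8*(1 - 2*(z1+z2) + (z1-z2)^2))). -/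
open scoped Nat

-- linearity helpers
private lemma iter_zero (n : ℕ) (x : ℂ) : iteratedDeriv n (fun _ : ℂ => (0:ℂ)) x = 0 := by
  induction n generalizing x with
  | zero => simp
  | succ n ih =>
    rw [iteratedDeriv_succ']
    simpa using ih x

private lemma iter_add {n : ℕ} {f g : ℂ → ℂ} (hf : ContDiff ℂ ⊤ f) (hg : ContDiff ℂ ⊤ g)
    (x : ℂ) : iteratedDeriv n (fun z => f z + g z) x = iteratedDeriv n f x + iteratedDeriv n g x := by
  rw [← iteratedDerivWithin_univ, ← iteratedDerivWithin_univ, ← iteratedDerivWithin_univ]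
  exact iteratedDerivWithin_add (Set.mem_univ x) uniqueDiffOn_univ
    (hf.of_le le_top).contDiffWithinAt (hg.of_le le_top).contDiffWithinAt

private lemma iter_sub {n : ℕ} {f g : ℂ → ℂ} (hf : ContDiff ℂ ⊤ f) (hg : ContDiff ℂ ⊤ g)
    (x : ℂ) : iteratedDeriv n (fun z => f z - g z) x = iteratedDeriv n f x - iteratedDeriv n g x := by
  rw [← iteratedDerivWithin_univ, ← iteratedDerivWithin_univ, ← iteratedDerivWithin_univ]
  exact iteratedDerivWithin_sub (Set.mem_univ x) uniqueDiffOn_univ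
    (hf.of_le le_top).contDiffWithinAt (hg.of_le le_top).contDiffWithinAt

private lemma iter_cmul {n : ℕ} {f : ℂ → ℂ} (hf : ContDiff ℂ ⊤ f) (c : ℂ)
    (x : ℂ) : iteratedDeriv n (fun z => c * f z) x = c * iteratedDeriv n f x := by
  rw [← iteratedDerivWithin_univ, ← iteratedDerivWithin_univ]
  exact iteratedDerivWithin_const_mul (Set.mem_univ x) uniqueDiffOn_univ c
    (hf.of_le le_top).contDiffWithinAt

private lemma cd_pow_add (a : ℂ) (m : ℕ) : ContDiff ℂ ⊤ (fun u : ℂ => (u + a)^m) :=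
  (contDiff_id.add contDiff_const).pow m

private lemma cd_mono (a : ℂ) (j m : ℕ) : ContDiff ℂ ⊤ (fun u : ℂ => u^j * (u + a)^m) :=
  (contDiff_id.pow j).mul (cd_pow_add a m)

-- L1
private lemma L1 (a : ℂ) (n : ℕ) : ∀ (m : ℕ) (x : ℂ),
    iteratedDeriv n (fun u : ℂ => (u + a)^m) x = (m.descFactorial n : ℂ) * (x + a)^(m - n) := by
  induction n with
  | zero => intro m x; simp
  | succ n ih =>
    intro m x
    rw [iteratedDeriv_succ']
    have hd : deriv (fun u : ℂ => (u + a)^m) = fun u : ℂ => (m : ℂ) * (u + a)^(m-1) := by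
      funext u
      have := (((hasDerivAt_id u).add_const a).pow m).deriv
      simpa using this  -- ok
    rw [hd, iter_cmul (cd_pow_add a (m-1)) (m:ℂ) x, ih (m-1) x]
    match m with
    | 0 => simp
    | m+1 =>
      rw [Nat.succ_descFactorial_succ]
      simp only [Nat.succ_sub_succ, Nat.add_sub_cancel, Nat.sub_zero]
      push_cast
      ring

private lemma iter_finsum {ι : Type*} (s : Finset ι) (f : ι → ℂ → ℂ)
    (hf : ∀ i ∈ s, ContDiff ℂ ⊤ (f i)) (n : ℕ) (x : ℂ) :
    iteratedDeriv n (fun u => ∑ i ∈ s, f i u) x = ∑ i ∈ s, iteratedDeriv n (f i) x := by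
  classical
  induction s using Finset.induction_on with
  | empty => simpa using iter_zero n x
  | insert _ _ hnot ih =>
    rename_i a s
    rw [Finset.sum_insert hnot]
    have h1 : ContDiff ℂ ⊤ (f a) := hf a (Finset.mem_insert_self a s)
    have h2 : ContDiff ℂ ⊤ (fun u => ∑ i ∈ s, f i u) := by
      apply ContDiff.sum
      intro i hi
      exact hf i (Finset.mem_insert_of_mem hi)
    have := iter_add (n := n) h1 h2 x
    simp only [Finset.sum_insert hnot]
    rw [show (fun u => f a u + ∑ i ∈ s, f i u) = (fun u => f a u + (fun v => ∑ i ∈ s, f i v) u) from rfl] at *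
    rw [this, ih (fun i hi => hf i (Finset.mem_insert_of_mem hi))]

private lemma L2 (a x : ℂ) {j n : ℕ} (hj : j ≤ n) :
    iteratedDeriv n (fun u : ℂ => u^j * (u + a)^(n - j)) x = (n ! : ℂ) := by
  have hfun : (fun u : ℂ => u^j * (u + a)^(n - j))
      = fun u : ℂ => ∑ i ∈ Finset.range (j+1),
          ((j.choose i : ℂ) * (-a)^(j-i)) * (u + a)^(i + (n - j)) := by
    funext u
    have hu : u^j = ((u + a) + (-a))^j := by ring_nf
    rw [hu, add_pow, Finset.sum_mul]
    apply Finset.sum_congr rfl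
    intro i _
    rw [pow_add]
    ring
  rw [hfun, iter_finsum _ _ (fun i _ => (contDiff_const.mul (cd_pow_add a _))) n x]
  have hterm : ∀ i ∈ Finset.range (j+1),
      iteratedDeriv n (fun u : ℂ => ((j.choose i : ℂ) * (-a)^(j-i)) * (u + a)^(i + (n - j))) x
      = if i = j then (n ! : ℂ) else 0 := by
    intro i hi
    rw [iter_cmul (cd_pow_add a _) _ x, L1]
    rcases eq_or_ne i j with rfl | hne
    · rw [if_pos rfl, Nat.add_sub_cancel' hj]
      simp [Nat.descFactorial_self]
    · have hlt : i < j := by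
        have := Finset.mem_range.mp hi; omega
      have hz : (i + (n - j)).descFactorial n = 0 :=
        Nat.descFactorial_eq_zero_iff_lt.mpr (by omega)
      rw [hz, if_neg hne]
      simp
  rw [Finset.sum_congr rfl hterm, Finset.sum_ite_eq' (Finset.range (j+1)) j (fun _ => (n ! : ℂ))]
  simp

private lemma inner_formula (Λ u2 : ℂ) (d1 d2 M : ℕ) (hM : M + 2 = 2*(d1+d2)) :
    iteratedDeriv (2*d1+1) (fun u1 : ℂ =>
        u1^2 * u2^2 * ((-u1 - u2)^(2*(d1:ℤ)+2*(d2:ℤ)-2))) Λ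
    = ((M+2).descFactorial (2*d1+1) : ℂ) * (u2^2 * (u2 + Λ)^((M+2) - (2*d1+1)))
      - 2*(((M+1).descFactorial (2*d1+1)) : ℂ) * (u2^3 * (u2 + Λ)^((M+1) - (2*d1+1)))
      + ((M.descFactorial (2*d1+1)) : ℂ) * (u2^4 * (u2 + Λ)^(M - (2*d1+1))) := by
  have hfn : (fun u1 : ℂ => u1^2 * u2^2 * ((-u1 - u2)^(2*(d1:ℤ)+2*(d2:ℤ)-2)))
      = fun u1 : ℂ => u2^2 * (u1+u2)^(M+2) - (2*u2^3) * (u1+u2)^(M+1) + u2^4 * (u1+u2)^M := by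
    funext u1
    have hz : (2*(d1:ℤ)+2*(d2:ℤ)-2) = ((M:ℕ) : ℤ) := by
      push_cast
      omega
    rw [hz, zpow_natCast]
    have heven : Even M := by
      refine ⟨d1 + d2 - 1, by omega⟩
    rw [show -u1 - u2 = -(u1 + u2) by ring, heven.neg_pow]
    ring
  rw [hfn]
  have hA : ContDiff ℂ ⊤ (fun u1 : ℂ => u2^2 * (u1+u2)^(M+2)) :=
    contDiff_const.mul (cd_pow_add u2 (M+2))
  have hB : ContDiff ℂ ⊤ (fun u1 : ℂ => (2*u2^3) * (u1+u2)^(M+1)) :=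
    contDiff_const.mul (cd_pow_add u2 (M+1))
  have hC : ContDiff ℂ ⊤ (fun u1 : ℂ => u2^4 * (u1+u2)^M) :=
    contDiff_const.mul (cd_pow_add u2 M)
  rw [iter_add (hA.sub hB) hC Λ, iter_sub hA hB Λ,
    iter_cmul (cd_pow_add u2 (M+2)) _ Λ, iter_cmul (cd_pow_add u2 (M+1)) _ Λ,
    iter_cmul (cd_pow_add u2 M) _ Λ, L1, L1, L1]
  ring

private lemma outer_formula (Λ : ℂ) (d1 d2 M : ℕ) (hM : M + 2 = 2*(d1+d2)) :
    iteratedDeriv (2*d2+1) (fun u2 : ℂ => iteratedDeriv (2*d1+1) (fun u1 : ℂ =>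
        u1^2 * u2^2 * ((-u1 - u2)^(2*(d1:ℤ)+2*(d2:ℤ)-2))) Λ) Λ
    = ((2*d2+1)! : ℂ) * (((M+2).descFactorial (2*d1+1) : ℂ)
        - 2*((M+1).descFactorial (2*d1+1) : ℂ) + (M.descFactorial (2*d1+1) : ℂ)) := by
  have hfn : (fun u2 : ℂ => iteratedDeriv (2*d1+1) (fun u1 : ℂ =>
        u1^2 * u2^2 * ((-u1 - u2)^(2*(d1:ℤ)+2*(d2:ℤ)-2))) Λ)
      = fun u2 : ℂ =>
        ((M+2).descFactorial (2*d1+1) : ℂ) * (u2^2 * (u2 + Λ)^((M+2) - (2*d1+1)))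
        - 2*(((M+1).descFactorial (2*d1+1)) : ℂ) * (u2^3 * (u2 + Λ)^((M+1) - (2*d1+1)))
        + ((M.descFactorial (2*d1+1)) : ℂ) * (u2^4 * (u2 + Λ)^(M - (2*d1+1))) := by
    funext u2
    exact inner_formula Λ u2 d1 d2 M hM
  rw [hfn]
  have hA : ContDiff ℂ ⊤ (fun u2 : ℂ =>
      ((M+2).descFactorial (2*d1+1) : ℂ) * (u2^2 * (u2 + Λ)^((M+2) - (2*d1+1)))) :=
    contDiff_const.mul (cd_mono Λ 2 _)
  have hB : ContDiff ℂ ⊤ (fun u2 : ℂ =>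
      2*(((M+1).descFactorial (2*d1+1)) : ℂ) * (u2^3 * (u2 + Λ)^((M+1) - (2*d1+1)))) :=
    contDiff_const.mul (cd_mono Λ 3 _)
  have hC : ContDiff ℂ ⊤ (fun u2 : ℂ =>
      ((M.descFactorial (2*d1+1)) : ℂ) * (u2^4 * (u2 + Λ)^(M - (2*d1+1)))) :=
    contDiff_const.mul (cd_mono Λ 4 _)
  rw [iter_add (hA.sub hB) hC Λ, iter_sub hA hB Λ,
    iter_cmul (cd_mono Λ 2 _) _ Λ, iter_cmul (cd_mono Λ 3 _) _ Λ, iter_cmul (cd_mono Λ 4 _) _ Λ]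
  have h2 : ((M+2).descFactorial (2*d1+1) : ℂ) *
      iteratedDeriv (2*d2+1) (fun u2 : ℂ => u2^2 * (u2 + Λ)^((M+2) - (2*d1+1))) Λ
      = ((M+2).descFactorial (2*d1+1) : ℂ) * ((2*d2+1)! : ℂ) := by
    by_cases hz : (M+2).descFactorial (2*d1+1) = 0
    · rw [hz]; simp
    · have hge : ¬ (M+2 < 2*d1+1) := fun h => hz (Nat.descFactorial_eq_zero_iff_lt.mpr h)
      rw [show (M+2) - (2*d1+1) = (2*d2+1) - 2 from by omega, L2 Λ Λ (by omega)]
  have h3 : (((M+1).descFactorial (2*d1+1)) : ℂ) *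
      iteratedDeriv (2*d2+1) (fun u2 : ℂ => u2^3 * (u2 + Λ)^((M+1) - (2*d1+1))) Λ
      = (((M+1).descFactorial (2*d1+1)) : ℂ) * ((2*d2+1)! : ℂ) := by
    by_cases hz : (M+1).descFactorial (2*d1+1) = 0
    · rw [hz]; simp
    · have hge : ¬ (M+1 < 2*d1+1) := fun h => hz (Nat.descFactorial_eq_zero_iff_lt.mpr h)
      rw [show (M+1) - (2*d1+1) = (2*d2+1) - 3 from by omega, L2 Λ Λ (by omega)]
  have h4 : ((M.descFactorial (2*d1+1)) : ℂ) *
      iteratedDeriv (2*d2+1) (fun u2 : ℂ => u2^4 * (u2 + Λ)^(M - (2*d1+1))) Λ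
      = ((M.descFactorial (2*d1+1)) : ℂ) * ((2*d2+1)! : ℂ) := by
    by_cases hz : M.descFactorial (2*d1+1) = 0
    · rw [hz]; simp
    · have hge : ¬ (M < 2*d1+1) := fun h => hz (Nat.descFactorial_eq_zero_iff_lt.mpr h)
      rw [show M - (2*d1+1) = (2*d2+1) - 4 from by omega, L2 Λ Λ (by omega)]
  linear_combination h2 - 2*h3 + h4

private lemma zpow_hda (m : ℤ) (a x : ℂ) (h : x + a ≠ 0) :
    HasDerivAt (fun u : ℂ => (u + a)^m) ((m:ℂ) * (x + a)^(m-1)) x := by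
  have := (hasDerivAt_zpow m (x+a) (Or.inl h)).comp x ((hasDerivAt_id x).add_const a)
  simpa [Function.comp_def] using this

private lemma c00_inner (Λ : ℂ) (u2 : ℂ) (h : Λ + u2 ≠ 0) :
    iteratedDeriv 1 (fun u1 : ℂ => u1^2 * u2^2 * ((-u1 - u2)^(-2:ℤ))) Λ
    = u2^2 * (2*Λ*(u2 + Λ)^(-2:ℤ) + Λ^2*(-2)*(u2 + Λ)^(-3:ℤ)) := by
  rw [iteratedDeriv_one]
  have hfn : (fun u1 : ℂ => u1^2 * u2^2 * ((-u1 - u2)^(-2:ℤ)))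
      = fun u1 : ℂ => u2^2 * (u1^2 * (u1 + u2)^(-2:ℤ)) := by
    funext u1
    rw [show -u1 - u2 = -(u1 + u2) by ring,
      Even.neg_zpow ⟨-1, by norm_num⟩]
    ring
  rw [hfn]
  have hd : HasDerivAt (fun u1 : ℂ => u2^2 * (u1^2 * (u1 + u2)^(-2:ℤ)))
      (u2^2 * (2*Λ*(u2 + Λ)^(-2:ℤ) + Λ^2*(-2)*(u2 + Λ)^(-3:ℤ))) Λ := by
    have h1 : HasDerivAt (fun u1 : ℂ => u1^2) (((2:ℕ):ℂ) * Λ^(2-1)) Λ := hasDerivAt_pow 2 Λ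
    have h2 := zpow_hda (-2) u2 Λ h
    have h3 := (h1.mul h2).const_mul (u2^2)
    refine h3.congr_deriv ?_
    rw [show ((-2:ℤ))-1 = -3 by norm_num, show (2:ℕ)-1 = 1 by norm_num,
      show Λ + u2 = u2 + Λ by ring]
    push_cast
    ring
  exact hd.deriv

private lemma c00_val (Λ : ℂ) (hΛ : Λ ≠ 0) :
    iteratedDeriv 1 (fun u2 : ℂ => iteratedDeriv 1 (fun u1 : ℂ =>
      u1^2 * u2^2 * ((-u1 - u2)^(-2:ℤ))) Λ) Λ = 3/8 := by
  rw [iteratedDeriv_one]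
  have h2Λ : Λ + Λ ≠ 0 := by
    intro h
    apply hΛ
    have h2 : (2:ℂ) * Λ = 0 := by linear_combination h
    simpa using h2
  have hev : (fun u2 : ℂ => iteratedDeriv 1 (fun u1 : ℂ =>
      u1^2 * u2^2 * ((-u1 - u2)^(-2:ℤ))) Λ)
      =ᶠ[nhds Λ] (fun u2 : ℂ => u2^2 * (2*Λ*(u2 + Λ)^(-2:ℤ) + Λ^2*(-2)*(u2 + Λ)^(-3:ℤ))) := by
    have hc : ContinuousAt (fun u2 : ℂ => Λ + u2) Λ := by fun_prop
    filter_upwards [hc.eventually_ne h2Λ] with u2 hu2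
    exact c00_inner Λ u2 hu2
  rw [hev.deriv_eq]
  have hd : HasDerivAt (fun u2 : ℂ => u2^2 * (2*Λ*(u2 + Λ)^(-2:ℤ) + Λ^2*(-2)*(u2 + Λ)^(-3:ℤ)))
      (((2:ℕ):ℂ)*Λ^(2-1) * (2*Λ*(Λ+Λ)^(-2:ℤ) + Λ^2*(-2)*(Λ+Λ)^(-3:ℤ))
        + Λ^2 * (2*Λ*(((-2:ℤ):ℂ)*(Λ+Λ)^((-2:ℤ)-1)) + Λ^2*(-2)*(((-3:ℤ):ℂ)*(Λ+Λ)^((-3:ℤ)-1)))) Λ := by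
    have h1 : HasDerivAt (fun u2 : ℂ => u2^2) (((2:ℕ):ℂ) * Λ^(2-1)) Λ := hasDerivAt_pow 2 Λ
    have h2 := ((zpow_hda (-2) Λ Λ h2Λ).const_mul (2*Λ)).add
      ((zpow_hda (-3) Λ Λ h2Λ).const_mul (Λ^2*(-2)))
    exact h1.mul h2
  rw [hd.deriv]
  rw [show ((-2:ℤ))-1 = -3 by norm_num, show ((-3:ℤ))-1 = -4 by norm_num,
    show (2:ℕ)-1 = 1 by norm_num, show Λ + Λ = 2*Λ by ring]
  have h2Λ' : (2:ℂ)*Λ ≠ 0 := by rwa [show (2:ℂ)*Λ = Λ + Λ by ring]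
  rw [zpow_neg, zpow_neg, zpow_neg]
  push_cast
  rw [show ((2*Λ):ℂ)^(2:ℤ) = 4*Λ^2 by rw [show (2:ℤ) = ((2:ℕ):ℤ) from rfl, zpow_natCast]; ring,
    show ((2*Λ):ℂ)^(3:ℤ) = 8*Λ^3 by rw [show (3:ℤ) = ((3:ℕ):ℤ) from rfl, zpow_natCast]; ring,
    show ((2*Λ):ℂ)^(4:ℤ) = 16*Λ^4 by rw [show (4:ℤ) = ((4:ℕ):ℤ) from rfl, zpow_natCast]; ring,
    mul_inv, mul_inv, mul_inv]
  have hΛ2 : (Λ:ℂ)^2 ≠ 0 := pow_ne_zero 2 hΛ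
  have hΛ3 : (Λ:ℂ)^3 ≠ 0 := pow_ne_zero 3 hΛ
  have hΛ4 : (Λ:ℂ)^4 ≠ 0 := pow_ne_zero 4 hΛ
  field_simp
  ring

private lemma S_val (a b : ℕ) :
    ((2*a+2*b+4).descFactorial (2*a+3) : ℂ)
      - 2*((2*a+2*b+3).descFactorial (2*a+3) : ℂ)
      + ((2*a+2*b+2).descFactorial (2*a+3) : ℂ)
    = ((2*a+2*b+2).choose (2*a+1) : ℂ) * ((2*a+3)! : ℂ) := by
  cases b with
  | zero =>
    have h0 : (2*a+2*0+2).descFactorial (2*a+3) = 0 :=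
      Nat.descFactorial_eq_zero_iff_lt.mpr (by omega)
    have h1 : (2*a+2*0+3).descFactorial (2*a+3) = (2*a+3)! := by
      rw [show 2*a+2*0+3 = 2*a+3 by omega, Nat.descFactorial_self]
    have h2 : (2*a+2*0+4).descFactorial (2*a+3) = (2*a+4)! := by
      have := Nat.factorial_mul_descFactorial (n := 2*a+2*0+4) (k := 2*a+3) (by omega)
      rw [show 2*a+2*0+4 - (2*a+3) = 1 by omega] at this
      simpa [Nat.factorial_one, show 2*a+2*0+4 = 2*a+4 by omega] using this
    have hch : (2*a+2*0+2).choose (2*a+1) = 2*a+2 := by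
      rw [show 2*a+2*0+2 = (2*a+1)+1 by omega, Nat.choose_succ_self_right]
    rw [h0, h1, h2, hch, show (2*a+4)! = (2*a+4) * (2*a+3)! from Nat.factorial_succ (2*a+3)]
    push_cast
    ring
  | succ b =>
    set A2 := (2*a+2*(b+1)+4).descFactorial (2*a+3) with hA2def
    set A1 := (2*a+2*(b+1)+3).descFactorial (2*a+3) with hA1def
    set A0 := (2*a+2*(b+1)+2).descFactorial (2*a+3) with hA0def
    set C := (2*a+2*(b+1)+2).choose (2*a+1) with hCdef
    have hA2 : (2*b+3)! * A2 = (2*a+2*b+6)! := by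
      have := Nat.factorial_mul_descFactorial (n := 2*a+2*(b+1)+4) (k := 2*a+3) (by omega)
      rw [show 2*a+2*(b+1)+4 - (2*a+3) = 2*b+3 by omega] at this
      rw [hA2def, this, show 2*a+2*(b+1)+4 = 2*a+2*b+6 by omega]
    have hA1 : (2*b+2)! * A1 = (2*a+2*b+5)! := by
      have := Nat.factorial_mul_descFactorial (n := 2*a+2*(b+1)+3) (k := 2*a+3) (by omega)
      rw [show 2*a+2*(b+1)+3 - (2*a+3) = 2*b+2 by omega] at this
      rw [hA1def, this, show 2*a+2*(b+1)+3 = 2*a+2*b+5 by omega]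
    have hA0 : (2*b+1)! * A0 = (2*a+2*b+4)! := by
      have := Nat.factorial_mul_descFactorial (n := 2*a+2*(b+1)+2) (k := 2*a+3) (by omega)
      rw [show 2*a+2*(b+1)+2 - (2*a+3) = 2*b+1 by omega] at this
      rw [hA0def, this, show 2*a+2*(b+1)+2 = 2*a+2*b+4 by omega]
    have hC : C * (2*a+1)! * (2*b+3)! = (2*a+2*b+4)! := by
      have := Nat.choose_mul_factorial_mul_factorial
        (n := 2*a+2*(b+1)+2) (k := 2*a+1) (by omega)
      rw [show 2*a+2*(b+1)+2 - (2*a+1) = 2*b+3 by omega] at this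
      rw [hCdef, this, show 2*a+2*(b+1)+2 = 2*a+2*b+4 by omega]
    -- expand factorials down to base values
    have e6 : (2*a+2*b+6)! = (2*a+2*b+6) * ((2*a+2*b+5) * (2*a+2*b+4)!) := by
      rw [show (2*a+2*b+6) = (2*a+2*b+5)+1 by omega, Nat.factorial_succ,
        show (2*a+2*b+5) = (2*a+2*b+4)+1 by omega, Nat.factorial_succ]
    have e5 : (2*a+2*b+5)! = (2*a+2*b+5) * (2*a+2*b+4)! := by
      rw [show (2*a+2*b+5) = (2*a+2*b+4)+1 by omega, Nat.factorial_succ]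
    have e3 : (2*b+3)! = (2*b+3) * ((2*b+2) * (2*b+1)!) := by
      rw [show (2*b+3) = (2*b+2)+1 by omega, Nat.factorial_succ,
        show (2*b+2) = (2*b+1)+1 by omega, Nat.factorial_succ]
    have e2 : (2*b+2)! = (2*b+2) * (2*b+1)! := by
      rw [show (2*b+2) = (2*b+1)+1 by omega, Nat.factorial_succ]
    have ea : (2*a+3)! = (2*a+3) * ((2*a+2) * (2*a+1)!) := by
      rw [show (2*a+3) = (2*a+2)+1 by omega, Nat.factorial_succ,
        show (2*a+2) = (2*a+1)+1 by omega, Nat.factorial_succ]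
    rw [e6] at hA2; rw [e3] at hA2 hC; rw [e5, e2] at hA1
    -- cast to ℂ
    have cA2 : ((2*b:ℂ)+3) * (((2*b:ℂ)+2) * ((2*b+1)! : ℂ)) * (A2:ℂ)
        = ((2*a:ℂ)+2*b+6) * (((2*a:ℂ)+2*b+5) * ((2*a+2*b+4)! : ℂ)) := by
      exact_mod_cast congrArg (Nat.cast : ℕ → ℂ) hA2
    have cA1 : ((2*b:ℂ)+2) * ((2*b+1)! : ℂ) * (A1:ℂ)
        = ((2*a:ℂ)+2*b+5) * ((2*a+2*b+4)! : ℂ) := by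
      exact_mod_cast congrArg (Nat.cast : ℕ → ℂ) hA1
    have cA0 : ((2*b+1)! : ℂ) * (A0:ℂ) = ((2*a+2*b+4)! : ℂ) := by
      exact_mod_cast congrArg (Nat.cast : ℕ → ℂ) hA0
    have cC : (C:ℂ) * ((2*a+1)! : ℂ) * (((2*b:ℂ)+3) * (((2*b:ℂ)+2) * ((2*b+1)! : ℂ)))
        = ((2*a+2*b+4)! : ℂ) := by
      exact_mod_cast congrArg (Nat.cast : ℕ → ℂ) hC
    rw [show 2*a+2*(b+1)+4 = 2*a+2*b+6 by omega] at hA2def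
    rw [ea]
    -- now pure algebra
    have hYne : ((2*b+1)! : ℂ) ≠ 0 := by
      exact_mod_cast Nat.factorial_ne_zero (2*b+1)
    have hB2ne : ((2*b:ℂ)+2) ≠ 0 := by
      have hn : ((2*b+2 : ℕ) : ℂ) ≠ 0 := Nat.cast_ne_zero.mpr (by omega)
      intro hcon
      apply hn
      push_cast
      linear_combination hcon
    have hB3ne : ((2*b:ℂ)+3) ≠ 0 := by
      have hn : ((2*b+3 : ℕ) : ℂ) ≠ 0 := Nat.cast_ne_zero.mpr (by omega)
      intro hcon
      apply hn
      push_cast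
      linear_combination hcon
    have hkey : (((2*b:ℂ)+3) * ((2*b:ℂ)+2) * ((2*b+1)! : ℂ)) *
        ((A2:ℂ) - 2*(A1:ℂ) + (A0:ℂ)
          - (C:ℂ)*(((2*a:ℂ)+3)*(((2*a:ℂ)+2)*((2*a+1)! : ℂ)))) = 0 := by
      linear_combination cA2 - (2*((2*b:ℂ)+3))*cA1 + (((2*b:ℂ)+3)*((2*b:ℂ)+2))*cA0
        - (((2*a:ℂ)+3)*((2*a:ℂ)+2))*cC
    have hz := (mul_eq_zero.mp hkey).resolve_left
      (mul_ne_zero (mul_ne_zero hB3ne hB2ne) hYne)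
    push_cast
    linear_combination hz

private lemma choose_le_two_pow (n k : ℕ) : n.choose k ≤ 2^n := by
  rcases le_or_gt k n with h | h
  · calc n.choose k ≤ ∑ i ∈ Finset.range (n+1), n.choose i :=
          Finset.single_le_sum (fun i _ => Nat.zero_le _) (Finset.mem_range.mpr (by omega))
      _ = 2^n := Nat.sum_range_choose n
  · rw [Nat.choose_eq_zero_of_lt h]; positivity

private lemma hasSum_binom (w1 w2 : ℂ) (h1 : ‖w1‖ < 1/2) (h2 : ‖w2‖ < 1/2) :
    HasSum (fun p : ℕ × ℕ => ((p.1+p.2).choose p.1 : ℂ) * (w1^p.1 * w2^p.2))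
      (1 - (w1+w2))⁻¹ := by
  set f := fun p : ℕ × ℕ => ((p.1+p.2).choose p.1 : ℂ) * (w1^p.1 * w2^p.2) with hfdef
  have hsum : Summable f := by
    apply Summable.of_norm_bounded (g := fun p : ℕ×ℕ => (2*‖w1‖)^p.1 * (2*‖w2‖)^p.2)
    · exact (summable_geometric_of_lt_one (by positivity) (by linarith)).mul_of_nonneg
        (summable_geometric_of_lt_one (by positivity) (by linarith))
        (fun n => by positivity) (fun n => by positivity)
    · intro p
      have hb : ((p.1+p.2).choose p.1 : ℝ) ≤ 2^(p.1+p.2) := by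
        exact_mod_cast choose_le_two_pow (p.1+p.2) p.1
      have : ‖f p‖ = ((p.1+p.2).choose p.1 : ℝ) * (‖w1‖^p.1 * ‖w2‖^p.2) := by
        rw [hfdef]
        simp [norm_mul, norm_pow]
      rw [this]
      calc ((p.1+p.2).choose p.1 : ℝ) * (‖w1‖^p.1 * ‖w2‖^p.2)
          ≤ 2^(p.1+p.2) * (‖w1‖^p.1 * ‖w2‖^p.2) := by
            apply mul_le_mul_of_nonneg_right hb (by positivity)
        _ = (2*‖w1‖)^p.1 * (2*‖w2‖)^p.2 := by
            rw [pow_add, mul_pow, mul_pow]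
            ring
  have hf : HasSum f (∑' p, f p) := hsum.hasSum
  have heq : HasSum (f ∘ (Finset.HasAntidiagonal.sigmaAntidiagonalEquivProd (A := ℕ))) (∑' p, f p) :=
    (Equiv.hasSum_iff _).mpr hf
  have hfib : ∀ n : ℕ, HasSum (fun c : (Finset.HasAntidiagonal.antidiagonal n : Finset (ℕ×ℕ)) =>
      (f ∘ (Finset.HasAntidiagonal.sigmaAntidiagonalEquivProd (A := ℕ))) ⟨n, c⟩) ((w1+w2)^n) := by
    intro n
    have hfin := hasSum_fintype (fun c : (Finset.HasAntidiagonal.antidiagonal n : Finset (ℕ×ℕ)) =>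
      (f ∘ (Finset.HasAntidiagonal.sigmaAntidiagonalEquivProd (A := ℕ))) ⟨n, c⟩)
    convert hfin using 1
    rw [show (∑ c : (Finset.HasAntidiagonal.antidiagonal n : Finset (ℕ×ℕ)),
        (f ∘ (Finset.HasAntidiagonal.sigmaAntidiagonalEquivProd (A := ℕ))) ⟨n, c⟩)
        = ∑ p ∈ Finset.HasAntidiagonal.antidiagonal n, f p from
      (Finset.sum_attach (Finset.HasAntidiagonal.antidiagonal n) f).symm ▸ rfl]
    rw [Finset.Nat.sum_antidiagonal_eq_sum_range_succ_mk, add_pow]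
    apply Finset.sum_congr rfl
    intro k hk
    have hkn : k ≤ n := by
      have := Finset.mem_range.mp hk; omega
    rw [hfdef]
    simp only
    rw [show k + (n - k) = n from Nat.add_sub_cancel' hkn]
    ring
  have hdiag := heq.sigma hfib
  have hgeo : HasSum (fun n : ℕ => (w1+w2)^n) (1 - (w1+w2))⁻¹ :=
    hasSum_geometric_of_norm_lt_one (lt_of_le_of_lt (norm_add_le _ _) (by linarith))
  rwa [hdiag.unique hgeo] at hf

private lemma Dne (z1 z2 : ℂ) (h1 : ‖z1‖ < 1/100) (h2 : ‖z2‖ < 1/100) :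
    (1 - 2*(z1+z2) + (z1-z2)^2) ≠ 0 := by
  intro h
  have he : (1:ℂ) = 2*(z1+z2) - (z1-z2)^2 := by linear_combination h
  have hn := congrArg norm he
  rw [norm_one] at hn
  have hb : ‖2*(z1+z2) - (z1-z2)^2‖ ≤ 2*(‖z1‖+‖z2‖) + (‖z1‖+‖z2‖)^2 := by
    calc ‖2*(z1+z2) - (z1-z2)^2‖ ≤ ‖2*(z1+z2)‖ + ‖(z1-z2)^2‖ := norm_sub_le _ _
      _ = 2*‖z1+z2‖ + ‖z1-z2‖^2 := by
          rw [norm_mul, norm_pow]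
          norm_num
      _ ≤ 2*(‖z1‖+‖z2‖) + (‖z1‖+‖z2‖)^2 := by
          have e1 : ‖z1+z2‖ ≤ ‖z1‖+‖z2‖ := norm_add_le _ _
          have e2 : ‖z1-z2‖ ≤ ‖z1‖+‖z2‖ := norm_sub_le _ _
          have e3 : (0:ℝ) ≤ ‖z1-z2‖ := norm_nonneg _
          nlinarith
  have hz1 : ‖z1‖ < 1/100 := h1
  have hz2 : ‖z2‖ < 1/100 := h2
  have h0 : (0:ℝ) ≤ ‖z1‖ := norm_nonneg _
  have h0' : (0:ℝ) ≤ ‖z2‖ := norm_nonneg _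
  nlinarith

private lemma hasSum_oddodd (z1 z2 : ℂ) (h1 : ‖z1‖ < 1/100)
    (h2 : ‖z2‖ < 1/100) :
    HasSum (fun q : ℕ × ℕ => ((2*q.1+2*q.2+2).choose (2*q.1+1) : ℂ) * (z1^(q.1+1) * z2^(q.2+1)))
      (2*z1*z2 / (1 - 2*(z1+z2) + (z1-z2)^2)) := by
  obtain ⟨w1, hw1⟩ := IsAlgClosed.exists_pow_nat_eq z1 (n := 2) (by norm_num)
  obtain ⟨w2, hw2⟩ := IsAlgClosed.exists_pow_nat_eq z2 (n := 2) (by norm_num)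
  have hb1 : ‖w1‖ < 1/10 := by
    by_contra hcon
    push_neg at hcon
    have : ‖z1‖ = ‖w1‖^2 := by rw [← hw1, norm_pow]
    have := h1
    nlinarith
  have hb2 : ‖w2‖ < 1/10 := by
    by_contra hcon
    push_neg at hcon
    have : ‖z2‖ = ‖w2‖^2 := by rw [← hw2, norm_pow]
    have := h2
    nlinarith
  have hmw1 : ‖-w1‖ < 1/2 := by rw [norm_neg]; linarith
  have hmw2 : ‖-w2‖ < 1/2 := by rw [norm_neg]; linarith
  have hpp := hasSum_binom w1 w2 (by linarith) (by linarith)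
  have hmp := hasSum_binom (-w1) w2 hmw1 (by linarith)
  have hpm := hasSum_binom w1 (-w2) (by linarith) hmw2
  have hmm := hasSum_binom (-w1) (-w2) hmw1 hmw2
  have hcomb := (((hpp.sub hmp).sub (hpm.sub hmm)).mul_left (w1*w2/4))
  -- compose with injection
  set ι : ℕ × ℕ → ℕ × ℕ := fun q => (2*q.1+1, 2*q.2+1) with hι
  have hinj : Function.Injective ι := by
    intro q q' hqq
    rw [hι] at hqq
    simp only [Prod.mk.injEq] at hqq
    exact Prod.ext (by omega) (by omega)
  set F : ℕ × ℕ → ℂ := fun p => (w1*w2/4) *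
      ((((p.1+p.2).choose p.1 : ℂ) * (w1^p.1 * w2^p.2)
        - ((p.1+p.2).choose p.1 : ℂ) * ((-w1)^p.1 * w2^p.2))
       - (((p.1+p.2).choose p.1 : ℂ) * (w1^p.1 * (-w2)^p.2)
        - ((p.1+p.2).choose p.1 : ℂ) * ((-w1)^p.1 * (-w2)^p.2))) with hF
  have hzero : ∀ p, p ∉ Set.range ι → F p = 0 := by
    intro p hp
    rcases Nat.even_or_odd p.1 with he | ho
    · rw [hF]
      simp only
      rw [he.neg_pow]
      ring
    · rcases Nat.even_or_odd p.2 with he2 | ho2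
      · rw [hF]
        simp only
        rw [he2.neg_pow]
        ring
      · exfalso
        apply hp
        obtain ⟨k, hk⟩ := ho
        obtain ⟨l, hl⟩ := ho2
        exact ⟨(k, l), Prod.ext (by simp [hι]; omega) (by simp [hι]; omega)⟩
  have hFsum : HasSum F ((w1*w2/4) *
      (((1 - (w1+w2))⁻¹ - (1 - (-w1+w2))⁻¹) - ((1 - (w1+-w2))⁻¹ - (1 - (-w1+-w2))⁻¹))) := hcomb
  have hcompose := (hinj.hasSum_iff hzero).mpr hFsum
  have hfeq : (F ∘ ι) = fun q : ℕ × ℕ =>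
      ((2*q.1+2*q.2+2).choose (2*q.1+1) : ℂ) * (z1^(q.1+1) * z2^(q.2+1)) := by
    funext q
    simp only [hF, hι, Function.comp_apply]
    rw [show (2*q.1+1) + (2*q.2+1) = 2*q.1+2*q.2+2 by omega]
    rw [(Odd.neg_pow ⟨q.1, by omega⟩ w1), (Odd.neg_pow ⟨q.2, by omega⟩ w2)]
    rw [← hw1, ← hw2]
    ring
  rw [hfeq] at hcompose
  convert hcompose using 1
  -- value identity
  have hne : ∀ v : ℂ, ‖v‖ ≤ 1/5 → (1:ℂ) - v ≠ 0 := by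
    intro v hv hcon
    have : (1:ℂ) = v := by linear_combination hcon
    have := congrArg norm this
    rw [norm_one] at this
    linarith [this ▸ hv]
  have hb : ∀ (s1 s2 : ℂ), ‖s1‖ < 1/10 → ‖s2‖ < 1/10 → ‖s1+s2‖ ≤ 1/5 := by
    intro s1 s2 hs1 hs2
    calc ‖s1+s2‖ ≤ ‖s1‖+‖s2‖ := norm_add_le _ _
      _ ≤ 1/5 := by linarith
  have hA := hne _ (hb w1 w2 hb1 hb2)
  have hB := hne _ (hb (-w1) w2 (by rwa [norm_neg]) hb2)
  have hC := hne _ (hb w1 (-w2) hb1 (by rwa [norm_neg]))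
  have hD := hne _ (hb (-w1) (-w2) (by rwa [norm_neg]) (by rwa [norm_neg]))
  rw [← hw1, ← hw2]
  have hprod : (1 - 2*(w1^2+w2^2) + (w1^2-w2^2)^2)
      = (1 - (w1+w2)) * (1 - (-w1+w2)) * (1 - (w1+-w2)) * (1 - (-w1+-w2)) := by ring
  rw [div_eq_iff (by rw [hprod]; exact mul_ne_zero (mul_ne_zero (mul_ne_zero hA hB) hC) hD)]
  field_simp
  ring

theorem stmt16 (Λ : ℂ) (hΛ : Λ ≠ 0) (c : ℕ → ℕ → ℂ)
    (hc : ∀ d1 d2 : ℕ, c d1 d2 =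
      (1 / (((2*d1+1)! : ℂ) * ((2*d2+1)! : ℂ))) *
      iteratedDeriv (2*d2+1) (fun u2 : ℂ =>
        iteratedDeriv (2*d1+1) (fun u1 : ℂ =>
          u1^2 * u2^2 * ((-u1 - u2)^(2*(d1:ℤ)+2*(d2:ℤ)-2))) Λ) Λ) :
    ∀ z1 z2 : ℂ, ‖z1‖ < 1/100 → ‖z2‖ < 1/100 →
      HasSum (fun p : ℕ × ℕ => z1^p.1 * z2^p.2 * c p.1 p.2)
        ((3 - 6*(z1+z2) + 3*z1^2 + 10*z1*z2 + 3*z2^2) / (8*(1 - 2*(z1+z2) + (z1-z2)^2))) := by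
  have key : ∀ d1 d2 M : ℕ, M + 2 = 2*(d1+d2) →
      c d1 d2 = (((M+2).descFactorial (2*d1+1) : ℂ)
        - 2*((M+1).descFactorial (2*d1+1) : ℂ) + ((M).descFactorial (2*d1+1) : ℂ))
        / ((2*d1+1)! : ℂ) := by
    intro d1 d2 M hM
    rw [hc d1 d2, outer_formula Λ d1 d2 M hM]
    have hf1 : ((2*d1+1)! : ℂ) ≠ 0 := by exact_mod_cast Nat.factorial_ne_zero _
    have hf2 : ((2*d2+1)! : ℂ) ≠ 0 := by exact_mod_cast Nat.factorial_ne_zero _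
    field_simp
  have hmain : ∀ a b : ℕ, c (a+1) (b+1) = ((2*a+2*b+2).choose (2*a+1) : ℂ) := by
    intro a b
    rw [key (a+1) (b+1) (2*a+2*b+2) (by omega)]
    rw [show 2*a+2*b+2+2 = 2*a+2*b+4 by omega, show 2*a+2*b+2+1 = 2*a+2*b+3 by omega,
      show 2*(a+1)+1 = 2*a+3 by omega]
    rw [S_val a b]
    have hf : ((2*a+3)! : ℂ) ≠ 0 := by exact_mod_cast Nat.factorial_ne_zero _
    rw [mul_div_cancel_right₀ _ hf]
  have hax1 : ∀ a : ℕ, c (a+1) 0 = 0 := by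
    intro a
    rw [key (a+1) 0 (2*a) (by omega)]
    rw [show 2*(a+1)+1 = 2*a+3 by omega,
      Nat.descFactorial_eq_zero_iff_lt.mpr (show 2*a+2 < 2*a+3 by omega),
      Nat.descFactorial_eq_zero_iff_lt.mpr (show 2*a+1 < 2*a+3 by omega),
      Nat.descFactorial_eq_zero_iff_lt.mpr (show 2*a < 2*a+3 by omega)]
    norm_num
  have hax2 : ∀ b : ℕ, c 0 (b+1) = 0 := by
    intro b
    rw [key 0 (b+1) (2*b) (by omega)]
    have hnum : ((2*b+2).descFactorial (2*0+1) : ℂ)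
        - 2*((2*b+1).descFactorial (2*0+1) : ℂ) + ((2*b).descFactorial (2*0+1) : ℂ) = 0 := by
      rw [show 2*0+1 = 1 by omega, Nat.descFactorial_one, Nat.descFactorial_one,
        Nat.descFactorial_one]
      push_cast
      ring
    rw [hnum, zero_div]
  have h00 : c 0 0 = 3/8 := by
    rw [hc 0 0]
    norm_num
    have hv := c00_val Λ hΛ
    norm_num at hv
    exact hv
  intro z1 z2 h1 h2
  have hOO := hasSum_oddodd z1 z2 h1 h2
  set e : ℕ×ℕ → ℂ := fun p => if p = ((0,0) : ℕ×ℕ) then (3/8:ℂ) else 0 with he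
  set J : ℕ×ℕ → ℕ×ℕ := fun q => (q.1+1, q.2+1) with hJdef
  have hJinj : Function.Injective J := by
    intro q q' h
    rw [hJdef] at h
    simp only [Prod.mk.injEq] at h
    exact Prod.ext (by omega) (by omega)
  have hvan : ∀ p, p ∉ Set.range J → (z1^p.1 * z2^p.2 * c p.1 p.2 - e p) = 0 := by
    intro p hp
    have hax : p.1 = 0 ∨ p.2 = 0 := by
      by_contra hcon
      push_neg at hcon
      apply hp
      exact ⟨(p.1 - 1, p.2 - 1), Prod.ext (by simp [hJdef]; omega) (by simp [hJdef]; omega)⟩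
    rcases p with ⟨p1, p2⟩
    simp only at hax
    rcases hax with rfl | rfl
    · cases p2 with
      | zero => simp [he, h00]
      | succ k =>
        rw [hax2 k, he]
        norm_num
    · cases p1 with
      | zero => simp [he, h00]
      | succ k =>
        rw [hax1 k, he]
        norm_num
  have hg : HasSum (fun p : ℕ×ℕ => z1^p.1 * z2^p.2 * c p.1 p.2 - e p)
      (2*z1*z2/(1-2*(z1+z2)+(z1-z2)^2)) := by
    apply (hJinj.hasSum_iff hvan).mp
    have hfeq : ((fun p : ℕ×ℕ => z1^p.1 * z2^p.2 * c p.1 p.2 - e p) ∘ J)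
        = fun q : ℕ×ℕ => ((2*q.1+2*q.2+2).choose (2*q.1+1) : ℂ) * (z1^(q.1+1) * z2^(q.2+1)) := by
      funext q
      simp only [Function.comp_apply, hJdef, he]
      rw [hmain q.1 q.2, if_neg (by simp)]
      ring
    rw [hfeq]
    exact hOO
  have hee : HasSum e (3/8) := hasSum_ite_eq ((0,0) : ℕ×ℕ) (3/8 : ℂ)
  have htot := hg.add hee
  have hfun : (fun p : ℕ×ℕ => (z1^p.1 * z2^p.2 * c p.1 p.2 - e p) + e p)
      = fun p : ℕ×ℕ => z1^p.1 * z2^p.2 * c p.1 p.2 := by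
    funext p
    ring
  rw [hfun] at htot
  convert htot using 1
  have hΔ := Dne z1 z2 h1 h2
  rw [div_add_div _ _ hΔ (by norm_num : (8:ℂ) ≠ 0),
    div_eq_div_iff (mul_ne_zero (by norm_num) hΔ) (mul_ne_zero hΔ (by norm_num))]
  ring
end

section
/- Let λ, p, q ∈ ℂ with λ ≠ 0, 2p+1 ≠ 0, 2q+3 ≠ 0 and p ≠ q+1, and define G : ℂ → ℂ → ℂ by G u1 u2 = u1^3 / ((-2*u1 - u2) * (u1 - p*λ) * (u2 - λ)^2 * (u1 - u2 - q*λ)). Then there exists ε > 0 such that for all real r1, r2 with 0 < r2 < r1 < ε: (1/(2πi))^2 · ∮_{|u2-λ|=r2} (∮_{|u1-pλ|=r1} G u1 u2 du1) du2 + (1/(2πi))^2 · ∮_{|u1-(1+q)λ|=r1} (∮_{|u2-λ|=r2} G u1 u2 du2) du1 = -((2*q+3)^2*p^2 + (4*q^2+15*q+12)*p + (q+1)*(q+3)) / ((2*p+1)^2*(2*q+3)^2). That is, the sum of the iterated residues of G at (pλ, λ) and ((1+q)λ, λ) equals -6x with x = ((2q+3)^2p^2 + (4q^2+15q+12)p +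 (q+1)(q+3)) / (6(2p+1)^2(2q+3)^2). -/
open scoped Nat
open Metric

set_option maxHeartbeats 1000000

private lemma nz17 {z w : ℂ} {b : ℝ} (h1 : ‖z - w‖ ≤ b) (h2 : b < ‖w‖) : z ≠ 0 := by
  intro h; rw [h, zero_sub, norm_neg] at h1; exact absurd h2 (not_lt.mpr h1)

private lemma bnd17 {u v : ℂ} {a b : ℝ} (hu : ‖u‖ ≤ a) (hv : ‖v‖ ≤ b) :
    ‖(-2:ℂ)*u + (-1:ℂ)*v‖ ≤ 2*a + b := by
  calc ‖(-2:ℂ)*u + (-1:ℂ)*v‖ ≤ ‖(-2:ℂ)*u‖ + ‖(-1:ℂ)*v‖ := norm_add_le _ _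
    _ = 2*‖u‖ + ‖v‖ := by simp [norm_mul]
    _ ≤ 2*a + b := by linarith

private lemma bnd17' {u v : ℂ} {a b : ℝ} (hu : ‖u‖ ≤ a) (hv : ‖v‖ ≤ b) :
    ‖u - v‖ ≤ a + b := (norm_sub_le _ _).trans (by linarith)

private lemma deriv_eq_smul_circleIntegral17 {f : ℂ → ℂ} {c : ℂ} {R : ℝ} (h0 : 0 < R)
    (hc : DiffContOnCl ℂ f (ball c R)) :
    deriv f c = (2 * (Real.pi : ℂ) * Complex.I)⁻¹ • ∮ z in C(c, R), (z - c) ^ (-2 : ℤ) • f z := by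
  have h := DiffContOnCl.deriv_eq_smul_circleIntegral h0 hc
  have e : (∮ z in C(c, R), (z - c) ^ (-2 : ℤ) • f z) =
      ∮ z in C(c, R), (1 / (z - c) ^ 2) • f z := by
    congr 1; funext z; rw [zpow_neg, one_div]; norm_cast
  rw [e, h, smul_smul, inv_mul_cancel₀ Complex.two_pi_I_ne_zero, one_smul]

theorem stmt17 (Λ p q : ℂ) (hΛ : Λ ≠ 0) (hp : 2*p + 1 ≠ 0)
    (hq : 2*q + 3 ≠ 0) (hpq : p ≠ q + 1)
    (G : ℂ → ℂ → ℂ)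
    (hG : ∀ u1 u2 : ℂ, G u1 u2 =
      u1^3 / ((-2*u1 - u2) * (u1 - p*Λ) * (u2 - Λ)^2 * (u1 - u2 - q*Λ))) :
    ∃ ε > 0, ∀ r1 r2 : ℝ, 0 < r2 → r2 < r1 → r1 < ε →
      (1/(2*(Real.pi : ℂ)*Complex.I))^2 *
        (∮ u2 in C(Λ, r2), (∮ u1 in C(p*Λ, r1), G u1 u2)) +
      (1/(2*(Real.pi : ℂ)*Complex.I))^2 *
        (∮ u1 in C((1+q)*Λ, r1), (∮ u2 in C(Λ, r2), G u1 u2)) =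
      -((2*q+3)^2*p^2 + (4*q^2+15*q+12)*p + (q+1)*(q+3)) / ((2*p+1)^2*(2*q+3)^2) := by
  have hpq' : p - q - 1 ≠ 0 := fun h0 => hpq (by linear_combination h0)
  have hA1p : (0:ℝ) < ‖(2*p+1)*Λ‖ := norm_pos_iff.mpr (mul_ne_zero hp hΛ)
  have hA2p : (0:ℝ) < ‖(p-q-1)*Λ‖ := norm_pos_iff.mpr (mul_ne_zero hpq' hΛ)
  have hA3p : (0:ℝ) < ‖(2*q+3)*Λ‖ := norm_pos_iff.mpr (mul_ne_zero hq hΛ)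
  have hc : (2*(Real.pi : ℂ)*Complex.I) ≠ 0 := Complex.two_pi_I_ne_zero
  have hsq : ∀ X : ℂ, (2*(Real.pi : ℂ)*Complex.I)^2 *
      ((2*(Real.pi : ℂ)*Complex.I)⁻¹ * X) = (2*(Real.pi : ℂ)*Complex.I) * X := fun X => by
    rw [pow_two, mul_assoc, mul_inv_cancel_left₀ hc]
  have c1 : (-2*(p*Λ) - Λ) ≠ 0 := fun h => (mul_ne_zero hp hΛ) (by linear_combination -h)
  have c2 : (p*Λ - Λ - q*Λ) ≠ 0 := fun h => (mul_ne_zero hpq' hΛ) (by linear_combination h)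
  have c3 : (-2*((1+q)*Λ) - Λ) ≠ 0 := fun h => (mul_ne_zero hq hΛ) (by linear_combination -h)
  have c4 : ((1+q)*Λ - p*Λ) ≠ 0 := fun h => (mul_ne_zero hpq' hΛ) (by linear_combination -h)
  refine ⟨min ‖(2*p+1)*Λ‖ (min ‖(p-q-1)*Λ‖ ‖(2*q+3)*Λ‖) / 8, by positivity, ?_⟩
  intro r1 r2 hr2 hr21 hr1
  have hr1p : (0:ℝ) < r1 := hr2.trans hr21
  have hb1 : min ‖(2*p+1)*Λ‖ (min ‖(p-q-1)*Λ‖ ‖(2*q+3)*Λ‖) ≤ ‖(2*p+1)*Λ‖ := min_le_left _ _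
  have hb2 : min ‖(2*p+1)*Λ‖ (min ‖(p-q-1)*Λ‖ ‖(2*q+3)*Λ‖) ≤ ‖(p-q-1)*Λ‖ :=
    le_trans (min_le_right _ _) (min_le_left _ _)
  have hb3 : min ‖(2*p+1)*Λ‖ (min ‖(p-q-1)*Λ‖ ‖(2*q+3)*Λ‖) ≤ ‖(2*q+3)*Λ‖ :=
    le_trans (min_le_right _ _) (min_le_right _ _)
  have hrA1 : 8*r1 < ‖(2*p+1)*Λ‖ := by linarith
  have hrA2 : 8*r1 < ‖(p-q-1)*Λ‖ := by linarith
  have hrA3 : 8*r1 < ‖(2*q+3)*Λ‖ := by linarith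
  -- derivative facts
  have hD1 : HasDerivAt (fun u2 : ℂ => (-2*(p*Λ) - u2) * (p*Λ - u2 - q*Λ))
      (-1 * (p*Λ - Λ - q*Λ) + (-2*(p*Λ) - Λ) * (-1)) Λ :=
    ((hasDerivAt_id Λ).const_sub (-2*(p*Λ))).mul
      (((hasDerivAt_id Λ).const_sub (p*Λ)).sub_const (q*Λ))
  have hg1 : HasDerivAt (fun u2 : ℂ => (p*Λ)^3 / ((-2*(p*Λ) - u2) * (p*Λ - u2 - q*Λ)))
      ((0 * ((-2*(p*Λ) - Λ) * (p*Λ - Λ - q*Λ)) -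
        (p*Λ)^3 * (-1 * (p*Λ - Λ - q*Λ) + (-2*(p*Λ) - Λ) * (-1))) /
        ((-2*(p*Λ) - Λ) * (p*Λ - Λ - q*Λ))^2) Λ :=
    (hasDerivAt_const Λ ((p*Λ)^3)).div hD1 (mul_ne_zero c1 c2)
  have hN : HasDerivAt (fun y : ℂ => -(y^3) * (y + 2*Λ + q*Λ))
      (-(((3:ℕ):ℂ) * ((1+q)*Λ)^(3-1)) * ((1+q)*Λ + 2*Λ + q*Λ) + -(((1+q)*Λ)^3) * 1)
      ((1+q)*Λ) :=
    ((hasDerivAt_pow 3 _).neg).mul (((hasDerivAt_id _).add_const (2*Λ)).add_const (q*Λ))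
  have hd2 : HasDerivAt (fun y : ℂ => (-2*y - Λ)^2 * (y - p*Λ))
      ((((2:ℕ):ℂ) * (-2*((1+q)*Λ) - Λ)^(2-1) * (-2 * 1)) * ((1+q)*Λ - p*Λ) +
        (-2*((1+q)*Λ) - Λ)^2 * 1) ((1+q)*Λ) :=
    ((((hasDerivAt_id _).const_mul (-2)).sub_const Λ).pow 2).mul
      ((hasDerivAt_id _).sub_const (p*Λ))
  have hkd : HasDerivAt (fun u1 : ℂ => -(u1^3) * (u1 + 2*Λ + q*Λ) / ((-2*u1 - Λ)^2 * (u1 - p*Λ)))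
      (((-(((3:ℕ):ℂ) * ((1+q)*Λ)^(3-1)) * ((1+q)*Λ + 2*Λ + q*Λ) + -(((1+q)*Λ)^3) * 1) *
          ((-2*((1+q)*Λ) - Λ)^2 * ((1+q)*Λ - p*Λ)) -
        (-(((1+q)*Λ)^3) * ((1+q)*Λ + 2*Λ + q*Λ)) *
          ((((2:ℕ):ℂ) * (-2*((1+q)*Λ) - Λ)^(2-1) * (-2 * 1)) * ((1+q)*Λ - p*Λ) +
            (-2*((1+q)*Λ) - Λ)^2 * 1)) /
        ((-2*((1+q)*Λ) - Λ)^2 * ((1+q)*Λ - p*Λ))^2) ((1+q)*Λ) :=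
    hN.div hd2 (mul_ne_zero (pow_ne_zero 2 c3) c4)
  -- Term 1
  have hT1 : (∮ u2 in C(Λ, r2), (∮ u1 in C(p*Λ, r1), G u1 u2)) =
      (2*(Real.pi : ℂ)*Complex.I)^2 *
        deriv (fun u2 : ℂ => (p*Λ)^3 / ((-2*(p*Λ) - u2) * (p*Λ - u2 - q*Λ))) Λ := by
    have step1 : Set.EqOn (fun u2 => ∮ u1 in C(p*Λ, r1), G u1 u2)
        (fun u2 => (2*(Real.pi : ℂ)*Complex.I) *
          ((u2 - Λ)^(-2:ℤ) * ((p*Λ)^3 / ((-2*(p*Λ) - u2) * (p*Λ - u2 - q*Λ)))))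
        (sphere Λ r2) := by
      intro u2 hu2m
      have hu2 : ‖u2 - Λ‖ = r2 := by rwa [mem_sphere_iff_norm] at hu2m
      have hu2ne : u2 - Λ ≠ 0 := by
        intro h; rw [h, norm_zero] at hu2; linarith
      have hfd : DifferentiableOn ℂ
          (fun u1 => u1^3 / ((-2*u1 - u2) * (u2 - Λ)^2 * (u1 - u2 - q*Λ)))
          (closedBall (p*Λ) r1) := by
        apply DifferentiableOn.div (by fun_prop) (by fun_prop)
        intro u1 hu1m
        have hu1 : ‖u1 - p*Λ‖ ≤ r1 := by rwa [mem_closedBall_iff_norm] at hu1m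
        have n11 : -2*u1 - u2 ≠ 0 := by
          refine nz17 (w := -((2*p+1)*Λ)) (b := 2*r1 + r2) ?_ ?_
          · rw [show -2*u1 - u2 - -((2*p+1)*Λ) = (-2:ℂ)*(u1 - p*Λ) + (-1:ℂ)*(u2 - Λ) by ring]
            exact bnd17 hu1 hu2.le
          · rw [norm_neg]; linarith
        have n12 : u1 - u2 - q*Λ ≠ 0 := by
          refine nz17 (w := (p-q-1)*Λ) (b := r1 + r2) ?_ ?_
          · rw [show u1 - u2 - q*Λ - (p-q-1)*Λ = (u1 - p*Λ) - (u2 - Λ) by ring]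
            exact bnd17' hu1 hu2.le
          · linarith
        exact mul_ne_zero (mul_ne_zero n11 (pow_ne_zero 2 hu2ne)) n12
      have key := hfd.circleIntegral_sub_inv_smul (w := p*Λ) (Metric.mem_ball_self hr1p)
      calc (∮ u1 in C(p*Λ, r1), G u1 u2)
          = ∮ u1 in C(p*Λ, r1), (u1 - p*Λ)⁻¹ •
              (u1^3 / ((-2*u1 - u2) * (u2 - Λ)^2 * (u1 - u2 - q*Λ))) :=
            circleIntegral.integral_congr hr1p.le (fun u1 _ => by
              rw [hG]; simp only [smul_eq_mul, div_eq_mul_inv, mul_inv]; ring)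
        _ = (2*(Real.pi : ℂ)*Complex.I) •
              ((p*Λ)^3 / ((-2*(p*Λ) - u2) * (u2 - Λ)^2 * (p*Λ - u2 - q*Λ))) := key
        _ = (2*(Real.pi : ℂ)*Complex.I) *
              ((u2 - Λ)^(-2:ℤ) * ((p*Λ)^3 / ((-2*(p*Λ) - u2) * (p*Λ - u2 - q*Λ)))) := by
            rw [smul_eq_mul, zpow_neg, zpow_two]
            simp only [div_eq_mul_inv, mul_inv, ← inv_pow]; ring
    rw [circleIntegral.integral_congr hr2.le step1, circleIntegral.integral_const_mul]
    have hgd : DifferentiableOn ℂ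
        (fun u2 : ℂ => (p*Λ)^3 / ((-2*(p*Λ) - u2) * (p*Λ - u2 - q*Λ)))
        (closedBall Λ r2) := by
      apply DifferentiableOn.div (by fun_prop) (by fun_prop)
      intro u2 hu2m
      have hu2 : ‖u2 - Λ‖ ≤ r2 := by rwa [mem_closedBall_iff_norm] at hu2m
      have m11 : -2*(p*Λ) - u2 ≠ 0 := by
        refine nz17 (w := -((2*p+1)*Λ)) (b := r2) ?_ ?_
        · rw [show -2*(p*Λ) - u2 - -((2*p+1)*Λ) = -(u2 - Λ) by ring, norm_neg]; exact hu2
        · rw [norm_neg]; linarith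
      have m12 : p*Λ - u2 - q*Λ ≠ 0 := by
        refine nz17 (w := (p-q-1)*Λ) (b := r2) ?_ ?_
        · rw [show p*Λ - u2 - q*Λ - (p-q-1)*Λ = -(u2 - Λ) by ring, norm_neg]; exact hu2
        · linarith
      exact mul_ne_zero m11 m12
    have hdc : DiffContOnCl ℂ
        (fun u2 : ℂ => (p*Λ)^3 / ((-2*(p*Λ) - u2) * (p*Λ - u2 - q*Λ))) (ball Λ r2) :=
      (hgd.mono closure_ball_subset_closedBall).diffContOnCl
    rw [deriv_eq_smul_circleIntegral17 hr2 hdc]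
    simp only [smul_eq_mul]
    rw [hsq]
  -- Term 2
  have hT2 : (∮ u1 in C((1+q)*Λ, r1), (∮ u2 in C(Λ, r2), G u1 u2)) =
      (2*(Real.pi : ℂ)*Complex.I)^2 *
        deriv (fun u1 : ℂ => -(u1^3) * (u1 + 2*Λ + q*Λ) / ((-2*u1 - Λ)^2 * (u1 - p*Λ)))
          ((1+q)*Λ) := by
    have step1 : Set.EqOn (fun u1 => ∮ u2 in C(Λ, r2), G u1 u2)
        (fun u1 => (2*(Real.pi : ℂ)*Complex.I) *
          ((u1 - (1+q)*Λ)^(-2:ℤ) *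
            (-(u1^3) * (u1 + 2*Λ + q*Λ) / ((-2*u1 - Λ)^2 * (u1 - p*Λ)))))
        (sphere ((1+q)*Λ) r1) := by
      intro u1 hu1m
      have hu1 : ‖u1 - (1+q)*Λ‖ = r1 := by rwa [mem_sphere_iff_norm] at hu1m
      have h0s : u1 - (1+q)*Λ ≠ 0 := by
        intro h; rw [h, norm_zero] at hu1; linarith
      have h0s' : u1 - Λ - q*Λ ≠ 0 := fun h => h0s (by linear_combination h)
      have m21s : -2*u1 - Λ ≠ 0 := by
        refine nz17 (w := -((2*q+3)*Λ)) (b := 2*r1 + 0) ?_ ?_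
        · rw [show -2*u1 - Λ - -((2*q+3)*Λ) = (-2:ℂ)*(u1 - (1+q)*Λ) + (-1:ℂ)*0 by ring]
          exact bnd17 hu1.le (by simp)
        · rw [norm_neg]; linarith
      have m22s : u1 - p*Λ ≠ 0 := by
        refine nz17 (w := -((p-q-1)*Λ)) (b := r1) ?_ ?_
        · rw [show u1 - p*Λ - -((p-q-1)*Λ) = u1 - (1+q)*Λ by ring]; exact hu1.le
        · rw [norm_neg]; linarith
      have hgd2 : DifferentiableOn ℂ
          (fun u2 => u1^3 / (((-2*u1 - u2) * (u1 - p*Λ)) * (u1 - u2 - q*Λ)))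
          (closedBall Λ r2) := by
        apply DifferentiableOn.div (by fun_prop) (by fun_prop)
        intro u2 hu2m
        have hu2 : ‖u2 - Λ‖ ≤ r2 := by rwa [mem_closedBall_iff_norm] at hu2m
        have n21 : -2*u1 - u2 ≠ 0 := by
          refine nz17 (w := -((2*q+3)*Λ)) (b := 2*r1 + r2) ?_ ?_
          · rw [show -2*u1 - u2 - -((2*q+3)*Λ) = (-2:ℂ)*(u1 - (1+q)*Λ) + (-1:ℂ)*(u2 - Λ) by ring]
            exact bnd17 hu1.le hu2
          · rw [norm_neg]; linarith
        have n23 : u1 - u2 - q*Λ ≠ 0 := by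
          intro h0
          have h1 : u1 - (1+q)*Λ = u2 - Λ := by linear_combination h0
          rw [h1] at hu1; linarith
        exact mul_ne_zero (mul_ne_zero n21 m22s) n23
      have hdc2 : DiffContOnCl ℂ
          (fun u2 => u1^3 / (((-2*u1 - u2) * (u1 - p*Λ)) * (u1 - u2 - q*Λ))) (ball Λ r2) :=
        (hgd2.mono closure_ball_subset_closedBall).diffContOnCl
      have hden : HasDerivAt (fun y : ℂ => ((-2*u1 - y) * (u1 - p*Λ)) * (u1 - y - q*Λ))
          ((-1 * (u1 - p*Λ)) * (u1 - Λ - q*Λ) + ((-2*u1 - Λ) * (u1 - p*Λ)) * (-1)) Λ :=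
        (((hasDerivAt_id Λ).const_sub (-2*u1)).mul_const (u1 - p*Λ)).mul
          (((hasDerivAt_id Λ).const_sub u1).sub_const (q*Λ))
      have hg2 : HasDerivAt
          (fun u2 : ℂ => u1^3 / (((-2*u1 - u2) * (u1 - p*Λ)) * (u1 - u2 - q*Λ)))
          ((0 * (((-2*u1 - Λ) * (u1 - p*Λ)) * (u1 - Λ - q*Λ)) -
            u1^3 * ((-1 * (u1 - p*Λ)) * (u1 - Λ - q*Λ) + ((-2*u1 - Λ) * (u1 - p*Λ)) * (-1))) /
            (((-2*u1 - Λ) * (u1 - p*Λ)) * (u1 - Λ - q*Λ))^2) Λ :=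
        (hasDerivAt_const Λ (u1^3)).div hden
          (mul_ne_zero (mul_ne_zero m21s m22s) h0s')
      have hRHS : (u1 - (1+q)*Λ)^(-2:ℤ) *
          (-(u1^3) * (u1 + 2*Λ + q*Λ) / ((-2*u1 - Λ)^2 * (u1 - p*Λ)))
          = (-(u1^3) * (u1 + 2*Λ + q*Λ)) /
            ((u1 - (1+q)*Λ)^2 * ((-2*u1 - Λ)^2 * (u1 - p*Λ))) := by
        rw [zpow_neg, zpow_two]; simp only [div_eq_mul_inv, mul_inv, ← inv_pow]; ring
      calc (∮ u2 in C(Λ, r2), G u1 u2)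
          = ∮ u2 in C(Λ, r2), (u2 - Λ)^(-2:ℤ) •
              (u1^3 / (((-2*u1 - u2) * (u1 - p*Λ)) * (u1 - u2 - q*Λ))) :=
            circleIntegral.integral_congr hr2.le (fun u2 _ => by
              rw [hG]; simp only [smul_eq_mul]; rw [zpow_neg, zpow_two]
              simp only [div_eq_mul_inv, mul_inv, ← inv_pow]; ring)
        _ = (2*(Real.pi : ℂ)*Complex.I) *
              deriv (fun u2 : ℂ =>
                u1^3 / (((-2*u1 - u2) * (u1 - p*Λ)) * (u1 - u2 - q*Λ))) Λ := by
            rw [deriv_eq_smul_circleIntegral17 hr2 hdc2]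
            simp only [smul_eq_mul]
            rw [mul_inv_cancel_left₀ hc]
        _ = (2*(Real.pi : ℂ)*Complex.I) *
              ((u1 - (1+q)*Λ)^(-2:ℤ) *
                (-(u1^3) * (u1 + 2*Λ + q*Λ) / ((-2*u1 - Λ)^2 * (u1 - p*Λ)))) := by
            rw [hg2.deriv]
            congr 1
            rw [hRHS, div_eq_div_iff (pow_ne_zero 2 (mul_ne_zero (mul_ne_zero m21s m22s) h0s'))
              (mul_ne_zero (pow_ne_zero 2 h0s) (mul_ne_zero (pow_ne_zero 2 m21s) m22s))]
            ring
    rw [circleIntegral.integral_congr hr1p.le step1, circleIntegral.integral_const_mul]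
    have hgdk : DifferentiableOn ℂ
        (fun u1 : ℂ => -(u1^3) * (u1 + 2*Λ + q*Λ) / ((-2*u1 - Λ)^2 * (u1 - p*Λ)))
        (closedBall ((1+q)*Λ) r1) := by
      apply DifferentiableOn.div (by fun_prop) (by fun_prop)
      intro u1 hu1m
      have hu1 : ‖u1 - (1+q)*Λ‖ ≤ r1 := by rwa [mem_closedBall_iff_norm] at hu1m
      have m21 : -2*u1 - Λ ≠ 0 := by
        refine nz17 (w := -((2*q+3)*Λ)) (b := 2*r1 + 0) ?_ ?_
        · rw [show -2*u1 - Λ - -((2*q+3)*Λ) = (-2:ℂ)*(u1 - (1+q)*Λ) + (-1:ℂ)*0 by ring]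
          exact bnd17 hu1 (by simp)
        · rw [norm_neg]; linarith
      have m22 : u1 - p*Λ ≠ 0 := by
        refine nz17 (w := -((p-q-1)*Λ)) (b := r1) ?_ ?_
        · rw [show u1 - p*Λ - -((p-q-1)*Λ) = u1 - (1+q)*Λ by ring]; exact hu1
        · rw [norm_neg]; linarith
      exact mul_ne_zero (pow_ne_zero 2 m21) m22
    have hdck : DiffContOnCl ℂ
        (fun u1 : ℂ => -(u1^3) * (u1 + 2*Λ + q*Λ) / ((-2*u1 - Λ)^2 * (u1 - p*Λ)))
        (ball ((1+q)*Λ) r1) :=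
      (hgdk.mono closure_ball_subset_closedBall).diffContOnCl
    rw [deriv_eq_smul_circleIntegral17 hr1p hdck]
    simp only [smul_eq_mul]
    rw [hsq]
  have hcc : ∀ X : ℂ, (1/(2*(Real.pi : ℂ)*Complex.I))^2 *
      ((2*(Real.pi : ℂ)*Complex.I)^2 * X) = X := fun X => by field_simp
  rw [hT1, hT2, hg1.deriv, hkd.deriv, hcc, hcc]
  have d1 : ((-2*(p*Λ) - Λ) * (p*Λ - Λ - q*Λ))^2 ≠ 0 := pow_ne_zero 2 (mul_ne_zero c1 c2)
  have d2 : ((-2*((1+q)*Λ) - Λ)^2 * ((1+q)*Λ - p*Λ))^2 ≠ 0 :=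
    pow_ne_zero 2 (mul_ne_zero (pow_ne_zero 2 c3) c4)
  have d3 : ((2*p+1)^2*(2*q+3)^2 : ℂ) ≠ 0 := mul_ne_zero (pow_ne_zero 2 hp) (pow_ne_zero 2 hq)
  rw [div_add_div _ _ d1 d2, div_eq_div_iff (mul_ne_zero d1 d2) d3]
  push_cast
  ring
end
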